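/- Every word w ∈ A⁺ over a finite alphabet A admits a factorization tree, with respect to the content morphism c : A⁺ → 2^A (mapping a word to its set of letters), of height at most 3·2^|A|, such that every internal node either has exactly 2 children, or has children whose labels all have the same content (note every element of the semigroup (2^A, ∪) is idempotent). -/

import Mathlib

def content {A : Type*} (w : List A) : Set A := {a | a ∈ w}

/-- `RamseyTree h w` : the nonempty word `w` admits a factorization tree of height
at most `h`, Ramseyan for the content morphism `c : A⁺ → 2^A`: leaves are single
letters, and every internal node either has exactly `2` children, or has at least
`2` children whose labels all have the same content (all elements of `(2^A, ∪)`
are idempotent). -/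
inductive RamseyTree (A : Type*) : ℕ → List A → Prop
  | leaf (a : A) (h : ℕ) : RamseyTree A h [a]
  | node2 {h : ℕ} {u v : List A} :
      RamseyTree A h u → RamseyTree A h v → RamseyTree A (h + 1) (u ++ v)
  | nodeIdem {h : ℕ} (ws : List (List A)) (hlen : 2 ≤ ws.length)
      (hcontent : ∀ u ∈ ws, ∀ v ∈ ws, content u = content v)
      (hsub : ∀ u ∈ ws, RamseyTree A h u) :
      RamseyTree A (h + 1) ws.flatten

theorem RamseyTree.mono {A : Type*} {h h' : ℕ} {w : List A} (hle : h ≤ h')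
    (t : RamseyTree A h w) : RamseyTree A h' w := by
  induction t generalizing h' with
  | leaf a h => exact .leaf a h'
  | node2 hu hv ihu ihv =>
      cases h' with
      | zero => omega
      | succ h'' => exact .node2 (ihu (by omega)) (ihv (by omega))
  | nodeIdem ws hlen hcontent hsub ih =>
      cases h' with
      | zero => omega
      | succ h'' => exact .nodeIdem ws hlen hcontent (fun u hu => ih u hu (by omega))

theorem content_eq_of_toFinset_eq {A : Type*} [DecidableEq A] {u v : List A}
    (h : u.toFinset = v.toFinset) : content u = content v := by
  ext a
  simp only [content, Set.mem_setOf_eq, ← List.mem_toFinset, h]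

lemma decomp {A : Type*} [DecidableEq A] (k : ℕ) (c : Finset A)
    (hc : c.card = k + 1)
    (IH : ∀ w : List A, w ≠ [] → w.toFinset.card ≤ k → RamseyTree A (3 * k) w) :
    ∀ n (w : List A), w.length ≤ n → w ≠ [] → w.toFinset = c →
    ∃ (us : List (List A)) (r : List A), w = us.flatten ++ r ∧ us ≠ [] ∧
      (∀ u ∈ us, u ≠ [] ∧ u.toFinset = c ∧ RamseyTree A (3 * k + 1) u) ∧
      (r = [] ∨ (r ≠ [] ∧ r.toFinset ⊂ c)) := by
  intro n
  induction n with
  | zero =>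
      intro w hlen hw _
      cases w with
      | nil => exact absurd rfl hw
      | cons a l => simp at hlen
  | succ n ihn =>
      intro w hlen hw hwc
      -- minimal prefix with full content
      have hP : ∃ m, (w.take m).toFinset = c := ⟨w.length, by rw [List.take_length, hwc]⟩
      set n₀ := Nat.find hP with hn₀
      have hspec : (w.take n₀).toFinset = c := Nat.find_spec hP
      have hn₀le : n₀ ≤ w.length := Nat.find_min' hP (by rw [List.take_length, hwc])
      have hn₀pos : 1 ≤ n₀ := by
        rcases Nat.eq_zero_or_pos n₀ with h0 | h
        · exfalso
          rw [h0] at hspec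
          simp at hspec
          rw [← hspec] at hc
          simp at hc
        · exact h
      obtain ⟨m, hm⟩ : ∃ m, n₀ = m + 1 := ⟨n₀ - 1, by omega⟩
      have hmlt : m < w.length := by omega
      set u' := w.take m with hu'
      set a := w[m]'hmlt with ha
      have hu_eq : w.take n₀ = u' ++ [a] := by
        rw [hm, List.take_succ, hu']
        congr 1
        simp [List.getElem?_eq_getElem hmlt, ha]
      have hu'sub : u'.toFinset ⊆ c := by
        intro x hx
        rw [← hwc, List.mem_toFinset]
        exact List.mem_of_mem_take (List.mem_toFinset.mp hx)
      have hu'ne : u'.toFinset ≠ c := by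
        have := Nat.find_min hP (show m < n₀ by omega)
        exact this
      have hu'card : u'.toFinset.card ≤ k := by
        have : u'.toFinset ⊂ c := ⟨hu'sub, fun h => hu'ne (le_antisymm hu'sub h)⟩
        have := Finset.card_lt_card this
        omega
      -- tree for u := w.take n₀ of height 3k+1
      have htu : RamseyTree A (3 * k + 1) (w.take n₀) := by
        rw [hu_eq]
        rcases eq_or_ne u' [] with h | h
        · rw [h]
          simpa using RamseyTree.leaf a (3 * k + 1)
        · exact .node2 (IH u' h hu'card) (.leaf a (3 * k))
      set v := w.drop n₀ with hv
      have hw_split : w = w.take n₀ ++ v := (List.take_append_drop n₀ w).symm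
      have hune : w.take n₀ ≠ [] := by
        intro h
        have : (w.take n₀).toFinset = ∅ := by rw [h]; simp
        rw [hspec] at this
        rw [this] at hc
        simp at hc
      rcases eq_or_ne v [] with hvnil | hvne
      · exact ⟨[w.take n₀], [], by
          simp [hvnil] at hw_split ⊢
          exact hw_split, by simp,
          fun u hu => by
            simp at hu
            exact hu ▸ ⟨hune, hspec, htu⟩, Or.inl rfl⟩
      · have hvsub : v.toFinset ⊆ c := by
          intro x hx
          rw [← hwc, List.mem_toFinset]
          exact List.mem_of_mem_drop (List.mem_toFinset.mp hx)
        rcases eq_or_ne v.toFinset c with hveq | hvneq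
        · -- recurse on v
          have hvlen : v.length ≤ n := by
            have : v.length = w.length - n₀ := by simp [hv]
            omega
          obtain ⟨us', r, heq, husne, hprop, hr⟩ := ihn v hvlen hvne hveq
          refine ⟨w.take n₀ :: us', r, ?_, by simp, ?_, hr⟩
          · conv_lhs => rw [hw_split, heq]
            simp [List.flatten_cons, List.append_assoc]
          · intro u hu
            rcases List.mem_cons.mp hu with h | h
            · exact h ▸ ⟨hune, hspec, htu⟩
            · exact hprop u h
        · exact ⟨[w.take n₀], v, by
            simpa using hw_split, by simp,
            fun u hu => by
              simp at hu
              exact hu ▸ ⟨hune, hspec, htu⟩,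
            Or.inr ⟨hvne, ⟨hvsub, fun h => hvneq (le_antisymm hvsub h)⟩⟩⟩

lemma main_lemma {A : Type*} [DecidableEq A] :
    ∀ k (w : List A), w ≠ [] → w.toFinset.card ≤ k → RamseyTree A (3 * k) w := by
  intro k
  induction k with
  | zero =>
      intro w hw hcard
      exfalso
      cases w with
      | nil => exact hw rfl
      | cons a l =>
          have : a ∈ (a :: l).toFinset := by simp
          have := Finset.card_pos.mpr ⟨a, this⟩
          omega
  | succ k ih =>
      intro w hw hcard
      rcases Nat.lt_or_ge w.toFinset.card (k + 1) with h | h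
      · exact (ih w hw (by omega)).mono (by omega)
      · have hck : w.toFinset.card = k + 1 := by omega
        obtain ⟨us, r, heq, husne, hprop, hr⟩ :=
          decomp k w.toFinset hck ih w.length w le_rfl hw rfl
        -- tree for us.flatten at height 3k+2
        have hflat : RamseyTree A (3 * k + 2) us.flatten := by
          rcases Nat.lt_or_ge us.length 2 with hl | hl
          · match us, husne with
            | [u], _ =>
                have := (hprop u (by simp)).2.2
                simpa using this.mono (by omega)
          · exact .nodeIdem us hl
              (fun u hu v hv => content_eq_of_toFinset_eq
                (((hprop u hu).2.1).trans ((hprop v hv).2.1).symm))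
              (fun u hu => (hprop u hu).2.2)
        rcases hr with hrnil | ⟨hrne, hrsub⟩
        · rw [heq, hrnil, List.append_nil]
          exact hflat.mono (by omega)
        · have hrcard : r.toFinset.card ≤ k := by
            have := Finset.card_lt_card hrsub
            omega
          have htr : RamseyTree A (3 * k + 2) r := (ih r hrne hrcard).mono (by omega)
          rw [heq]
          have : RamseyTree A (3 * k + 2 + 1) (us.flatten ++ r) := .node2 hflat htr
          exact this.mono (by omega)

/-- Simon's factorization forest theorem for the content morphism:
every nonempty word over a finite alphabet `A` admits a Ramseyan factorization
tree of height at most `3·2^|A|`. -/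
theorem simon_factorization_content {A : Type*} [Fintype A] (w : List A)
    (hw : w ≠ []) : RamseyTree A (3 * 2 ^ Fintype.card A) w := by
  classical
  have h1 : w.toFinset.card ≤ Fintype.card A := Finset.card_le_univ _
  have h2 : Fintype.card A ≤ 2 ^ Fintype.card A := (Nat.lt_two_pow_self).le
  exact (main_lemma (Fintype.card A) w hw h1).mono (by
    have : 3 * Fintype.card A ≤ 3 * 2 ^ Fintype.card A :=
      Nat.mul_le_mul_left 3 h2
    omega)
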